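/- For A > 0, the unique maximizer of F(τ₀) = (1 − τ₀)·log₂(1 + A·τ₀/(1 − τ₀)) over τ₀ ∈ (0,1) is τ₀* = (z* − 1)/(A + z* − 1), where z* > 1 is the unique solution of z·ln z − z + 1 = A. -/

import Mathlib

lemma key_le' (A z x : ℝ) (hA : 0 < A) (hz : 1 < z)
    (hzA : z * Real.log z - z + 1 = A) (hx : 1 < x) :
    Real.log x / (A + x - 1) ≤ Real.log z / (A + z - 1) := by
  have hlz : 0 < Real.log z := Real.log_pos hz
  have hdz : 0 < A + z - 1 := by linarith
  have hdx : 0 < A + x - 1 := by linarith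
  rw [div_le_div_iff₀ hdx hdz]
  have h1 : Real.log (x / z) ≤ x / z - 1 :=
    Real.log_le_sub_one_of_pos (by positivity)
  rw [Real.log_div (by linarith) (by linarith)] at h1
  have hxz : z * (x / z - 1) = x - z := by field_simp
  have h2 : z * Real.log x ≤ z * Real.log z + (x - z) := by
    nlinarith [mul_le_mul_of_nonneg_left h1 (show (0:ℝ) ≤ z by linarith)]
  have hA1 : A + z - 1 = z * Real.log z := by linarith
  have hA2 : A + x - 1 = z * Real.log z + (x - z) := by linarith
  rw [hA1, hA2]
  nlinarith [mul_le_mul_of_nonneg_right h2 hlz.le]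

lemma key_lt' (A z x : ℝ) (hA : 0 < A) (hz : 1 < z)
    (hzA : z * Real.log z - z + 1 = A) (hx : 1 < x) (hne : x ≠ z) :
    Real.log x / (A + x - 1) < Real.log z / (A + z - 1) := by
  have hlz : 0 < Real.log z := Real.log_pos hz
  have hdz : 0 < A + z - 1 := by linarith
  have hdx : 0 < A + x - 1 := by linarith
  rw [div_lt_div_iff₀ hdx hdz]
  have hne1 : x / z ≠ 1 := fun h =>
    hne (by rwa [div_eq_one_iff_eq (by linarith : z ≠ 0)] at h)
  have h1 : Real.log (x / z) < x / z - 1 :=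
    Real.log_lt_sub_one_of_pos (by positivity) hne1
  rw [Real.log_div (by linarith) (by linarith)] at h1
  have hxz : z * (x / z - 1) = x - z := by field_simp
  have h2 : z * Real.log x < z * Real.log z + (x - z) := by
    nlinarith [mul_lt_mul_of_pos_left h1 (show (0:ℝ) < z by linarith)]
  have hA1 : A + z - 1 = z * Real.log z := by linarith
  have hA2 : A + x - 1 = z * Real.log z + (x - z) := by linarith
  rw [hA1, hA2]
  nlinarith [mul_lt_mul_of_pos_right h2 hlz]

lemma F_eq' (A t : ℝ) (hA : 0 < A) (ht0 : 0 < t) (ht1 : t < 1) :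
    (1 - t) * Real.logb 2 (1 + A * t / (1 - t)) =
      A / (A + (1 + A * t / (1 - t)) - 1) *
        (Real.log (1 + A * t / (1 - t)) / Real.log 2) := by
  have hd : (0:ℝ) < 1 - t := by linarith
  have hAx : A + (1 + A * t / (1 - t)) - 1 = A / (1 - t) := by
    field_simp; ring
  rw [hAx, Real.logb]
  field_simp

lemma x_gt_one' (A t : ℝ) (hA : 0 < A) (ht0 : 0 < t) (ht1 : t < 1) :
    1 < 1 + A * t / (1 - t) := by
  have hd : (0:ℝ) < 1 - t := by linarith
  have : 0 < A * t / (1 - t) := by positivity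
  linarith

lemma t_eq' (A t : ℝ) (hA : 0 < A) (ht0 : 0 < t) (ht1 : t < 1) :
    t = ((1 + A * t / (1 - t)) - 1) / (A + (1 + A * t / (1 - t)) - 1) := by
  have hd : (0:ℝ) < 1 - t := by linarith
  have hAx : A + (1 + A * t / (1 - t)) - 1 = A / (1 - t) := by
    field_simp; ring
  rw [hAx]
  field_simp
  ring

lemma F_le' (A z t : ℝ) (hA : 0 < A) (hz : 1 < z)
    (hzA : z * Real.log z - z + 1 = A) (ht0 : 0 < t) (ht1 : t < 1) :
    (1 - t) * Real.logb 2 (1 + A * t / (1 - t)) ≤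
      A / (A + z - 1) * (Real.log z / Real.log 2) := by
  have hlog2 : 0 < Real.log 2 := Real.log_pos one_lt_two
  have hdz : 0 < A + z - 1 := by linarith
  set x := 1 + A * t / (1 - t) with hxdef
  have hx : 1 < x := x_gt_one' A t hA ht0 ht1
  have hdx : 0 < A + x - 1 := by linarith
  have key := key_le' A z x hA hz hzA hx
  rw [F_eq' A t hA ht0 ht1, ← hxdef]
  have h1 : A / (A + x - 1) * (Real.log x / Real.log 2)
      = (A / Real.log 2) * (Real.log x / (A + x - 1)) := by ring
  have h2 : A / (A + z - 1) * (Real.log z / Real.log 2)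
      = (A / Real.log 2) * (Real.log z / (A + z - 1)) := by ring
  rw [h1, h2]
  exact mul_le_mul_of_nonneg_left key (by positivity)

lemma F_lt' (A z t : ℝ) (hA : 0 < A) (hz : 1 < z)
    (hzA : z * Real.log z - z + 1 = A) (ht0 : 0 < t) (ht1 : t < 1)
    (hne : t ≠ (z - 1) / (A + z - 1)) :
    (1 - t) * Real.logb 2 (1 + A * t / (1 - t)) <
      A / (A + z - 1) * (Real.log z / Real.log 2) := by
  have hlog2 : 0 < Real.log 2 := Real.log_pos one_lt_two
  have hdz : 0 < A + z - 1 := by linarith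
  set x := 1 + A * t / (1 - t) with hxdef
  have hx : 1 < x := x_gt_one' A t hA ht0 ht1
  have hdx : 0 < A + x - 1 := by linarith
  have hxne : x ≠ z := by
    intro h
    apply hne
    have := t_eq' A t hA ht0 ht1
    rw [← hxdef, h] at this
    exact this
  have key := key_lt' A z x hA hz hzA hx hxne
  rw [F_eq' A t hA ht0 ht1, ← hxdef]
  have h1 : A / (A + x - 1) * (Real.log x / Real.log 2)
      = (A / Real.log 2) * (Real.log x / (A + x - 1)) := by ring
  have h2 : A / (A + z - 1) * (Real.log z / Real.log 2)
      = (A / Real.log 2) * (Real.log z / (A + z - 1)) := by ring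
  rw [h1, h2]
  exact mul_lt_mul_of_pos_left key (by positivity)

/-- The unique maximizer of F(τ₀) = (1 − τ₀)·log₂(1 + Aτ₀/(1 − τ₀)) over (0,1)
is τ₀* = (z* − 1)/(A + z* − 1) where z* > 1 solves z ln z − z + 1 = A. -/
theorem stmt_6 (A z : ℝ) (hA : 0 < A) (hz : 1 < z)
    (hzA : z * Real.log z - z + 1 = A) :
    ((z - 1) / (A + z - 1) ∈ Set.Ioo (0 : ℝ) 1) ∧
    (∀ t ∈ Set.Ioo (0 : ℝ) 1,
      (1 - t) * Real.logb 2 (1 + A * t / (1 - t)) ≤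
      (1 - (z - 1) / (A + z - 1)) *
        Real.logb 2 (1 + A * ((z - 1) / (A + z - 1)) / (1 - (z - 1) / (A + z - 1)))) ∧
    (∀ t ∈ Set.Ioo (0 : ℝ) 1,
      (∀ s ∈ Set.Ioo (0 : ℝ) 1,
        (1 - s) * Real.logb 2 (1 + A * s / (1 - s)) ≤
        (1 - t) * Real.logb 2 (1 + A * t / (1 - t))) →
      t = (z - 1) / (A + z - 1)) := by
  have hdz : 0 < A + z - 1 := by linarith
  have hT0 : 0 < (z - 1) / (A + z - 1) := div_pos (by linarith) hdz
  have hT1 : (z - 1) / (A + z - 1) < 1 := (div_lt_one hdz).mpr (by linarith)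
  have h1T : 1 - (z - 1) / (A + z - 1) = A / (A + z - 1) := by
    field_simp
    ring
  have hxT : 1 + A * ((z - 1) / (A + z - 1)) / (1 - (z - 1) / (A + z - 1)) = z := by
    rw [h1T]
    field_simp
    ring
  have hFT : (1 - (z - 1) / (A + z - 1)) *
      Real.logb 2 (1 + A * ((z - 1) / (A + z - 1)) / (1 - (z - 1) / (A + z - 1)))
      = A / (A + z - 1) * (Real.log z / Real.log 2) := by
    rw [hxT, h1T, Real.logb]
  refine ⟨⟨hT0, hT1⟩, ?_, ?_⟩
  · intro t ht
    rw [hFT]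
    exact F_le' A z t hA hz hzA ht.1 ht.2
  · intro t ht hmax
    by_contra hne
    have h1 := hmax ((z - 1) / (A + z - 1)) ⟨hT0, hT1⟩
    rw [hFT] at h1
    have h2 := F_lt' A z t hA hz hzA ht.1 ht.2 hne
    linarith
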